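/- For the bit-reversal sequence e_k = exp(iπ Σ_j a_j 2^{−j}), the quadratic Lebesgue function at the next node satisfies λ_{E_k,2}(e_k) = √(2^{σ₁(k)} − 1) for all k ≥ 1, where σ₁(k) is the number of ones in the binary expansion of k. -/

import Mathlib

/-- The bit-reversal (Van der Corput) Leja sequence on the unit circle:
`e k = exp(iπ Σ_j a_j 2^{-j})` where `k = Σ_j a_j 2^j` in binary. -/
noncomputable def e (k : ℕ) : ℂ :=
  Complex.exp (Real.pi * Complex.I *
    ∑ j ∈ Finset.range (k + 1), if k.testBit j then ((1 : ℂ) / 2) ^ j else 0)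

/-- Lagrange basis polynomial of index `j` for the nodes `z 0, …, z (k-1)`. -/
noncomputable def lag (z : ℕ → ℂ) (j k : ℕ) (x : ℂ) : ℂ :=
  ∏ i ∈ (Finset.range k).erase j, (x - z i) / (z j - z i)

/-- Quadratic Lebesgue function of the first `k` nodes. -/
noncomputable def leb2 (z : ℕ → ℂ) (k : ℕ) (x : ℂ) : ℝ :=
  Real.sqrt (∑ j ∈ Finset.range k, ‖lag z j k x‖ ^ 2)

/-- number of ones in the binary expansion -/
def sigma1 (k : ℕ) : ℕ := (Nat.digits 2 k).count 1

open Finset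

/-- the digit sum -/
noncomputable def S (k : ℕ) : ℂ :=
  ∑ j ∈ Finset.range (k + 1), if k.testBit j then ((1 : ℂ) / 2) ^ j else 0

lemma e_def (k : ℕ) : e k = Complex.exp (Real.pi * Complex.I * S k) := rfl

lemma S_extend (k n : ℕ) (hn : k + 1 ≤ n) :
    S k = ∑ j ∈ Finset.range n, if k.testBit j then ((1 : ℂ) / 2) ^ j else 0 := by
  unfold S
  apply Finset.sum_subset (Finset.range_subset_range.2 hn)
  intro j hj hj'
  simp only [mem_range] at hj hj'
  have hb : k.testBit j = false := by
    apply Nat.testBit_lt_two_pow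
    calc k < 2 ^ k := Nat.lt_two_pow_self (n := k)
    _ ≤ 2 ^ j := Nat.pow_le_pow_right (by norm_num) (by omega)
  simp [hb]

lemma S_shift (m n : ℕ) (hn : m + 1 ≤ n) :
    (∑ j ∈ Finset.range n, if m.testBit j then ((1 : ℂ) / 2) ^ (j+1) else 0)
      = (1/2) * S m := by
  rw [S_extend m n hn, Finset.mul_sum]
  apply Finset.sum_congr rfl
  intro j _
  split <;> ring

lemma S_two_mul (m : ℕ) : S (2*m) = (1/2) * S m := by
  unfold S
  rw [Finset.sum_range_succ' (fun j => if (2*m).testBit j then ((1:ℂ)/2)^j else 0) (2*m)]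
  have h0 : (2*m).testBit 0 = false := by
    rw [Nat.testBit_zero]; simp
  rw [h0]
  simp only [Bool.false_eq_true, if_false, add_zero]
  have h1 : ∀ j, (2*m).testBit (j+1) = m.testBit j := by
    intro j; rw [Nat.testBit_add_one]; congr 1; omega
  calc (∑ j ∈ Finset.range (2*m), if (2*m).testBit (j+1) then ((1:ℂ)/2)^(j+1) else 0)
      = ∑ j ∈ Finset.range (2*m), if m.testBit j then ((1:ℂ)/2)^(j+1) else 0 := by
        apply Finset.sum_congr rfl; intro j _; rw [h1]
    _ = (1/2) * S m := by
        rcases Nat.eq_zero_or_pos m with rfl | hm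
        · simp [S, Nat.testBit_zero]
        · exact S_shift m (2*m) (by omega)

lemma S_odd (m : ℕ) : S (2*m+1) = 1 + (1/2) * S m := by
  unfold S
  rw [Finset.sum_range_succ' (fun j => if (2*m+1).testBit j then ((1:ℂ)/2)^j else 0) (2*m+1)]
  have h0 : (2*m+1).testBit 0 = true := by
    rw [Nat.testBit_zero]; simp [Nat.add_mul_mod_self_left]
  rw [h0]
  have h1 : ∀ j, (2*m+1).testBit (j+1) = m.testBit j := by
    intro j; rw [Nat.testBit_add_one]; congr 1; omega
  simp only [if_true, pow_zero]
  rw [add_comm]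
  congr 1
  calc (∑ j ∈ Finset.range (2*m+1), if (2*m+1).testBit (j+1) then ((1:ℂ)/2)^(j+1) else 0)
      = ∑ j ∈ Finset.range (2*m+1), if m.testBit j then ((1:ℂ)/2)^(j+1) else 0 := by
        apply Finset.sum_congr rfl; intro j _; rw [h1]
    _ = (1/2) * S m := S_shift m (2*m+1) (by omega)

lemma e_odd (m : ℕ) : e (2*m+1) = - e (2*m) := by
  rw [e_def, e_def, S_odd, S_two_mul, mul_add, Complex.exp_add, mul_one,
    Complex.exp_pi_mul_I]
  ring

lemma e_sq (m : ℕ) : e (2*m) ^ 2 = e m := by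
  rw [e_def, e_def, S_two_mul, sq, ← Complex.exp_add]
  congr 1
  ring

lemma e_odd_sq (m : ℕ) : e (2*m+1) ^ 2 = e m := by
  rw [e_odd, neg_sq, e_sq]

lemma S_im (k : ℕ) : (S k).im = 0 := by
  unfold S
  rw [Complex.im_sum]
  apply Finset.sum_eq_zero
  intro j _
  split
  · rw [show ((1:ℂ)/2)^j = (((1/2:ℝ)^j : ℝ) : ℂ) by push_cast; ring]
    exact Complex.ofReal_im _
  · rfl

lemma e_abs (k : ℕ) : ‖e k‖ = 1 := by
  rw [e_def, Complex.norm_exp]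
  have : ((Real.pi : ℂ) * Complex.I * S k).re = 0 := by
    simp [Complex.mul_re, Complex.mul_im, S_im]
  rw [this, Real.exp_zero]

lemma e_ne (k : ℕ) : e k ≠ 0 := Complex.exp_ne_zero _

lemma e_zero : e 0 = 1 := by
  rw [e_def]
  have : S 0 = 0 := by simp [S, Nat.testBit_zero]
  rw [this, mul_zero, Complex.exp_zero]

lemma e_one : e 1 = -1 := by
  have := e_odd 0
  simpa [e_zero] using this

lemma e_half_sq (t : ℕ) : (e t) ^ 2 = e (t/2) := by
  obtain ⟨m, rfl | rfl⟩ : ∃ m, t = 2*m ∨ t = 2*m+1 := ⟨t/2, by omega⟩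
  · rw [e_sq]; congr 1; omega
  · rw [e_odd_sq]; congr 1; omega

lemma e_inj (a b : ℕ) (h : e a = e b) : a = b := by
  suffices H : ∀ n a b, a + b ≤ n → e a = e b → a = b from H (a+b) a b le_rfl h
  intro n
  induction n with
  | zero => intro a b h1 _; omega
  | succ n IH =>
    intro a b hab h
    by_cases hsmall : a ≤ 1 ∧ b ≤ 1
    · obtain ⟨ha, hb⟩ := hsmall
      interval_cases a <;> interval_cases b <;>
        first
          | rfl
          | (exfalso; rw [e_zero, e_one] at h; norm_num at h)
    · have h2 : e (a/2) = e (b/2) := by rw [← e_half_sq, ← e_half_sq, h]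
      have hd : a/2 = b/2 := IH (a/2) (b/2) (by omega) h2
      by_contra hne
      obtain ⟨s, rfl | rfl⟩ : ∃ s, a = 2*s ∨ a = 2*s+1 := ⟨a/2, by omega⟩ <;>
        obtain ⟨t, rfl | rfl⟩ : ∃ t, b = 2*t ∨ b = 2*t+1 := ⟨b/2, by omega⟩
      · omega
      · have hst : s = t := by omega
        subst hst
        rw [e_odd s] at h
        exact e_ne (2*s) (by linear_combination h/2)
      · have hst : s = t := by omega
        subst hst
        rw [e_odd s] at h
        exact e_ne (2*s) (by linear_combination -h/2)
      · omega

lemma sum_pair (F : ℕ → ℝ) (m : ℕ) :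
    ∑ j ∈ range (2*m), F j = ∑ i ∈ range m, (F (2*i) + F (2*i+1)) := by
  induction m with
  | zero => simp
  | succ m IH =>
    rw [show 2*(m+1) = (2*m+1)+1 by ring, Finset.sum_range_succ, Finset.sum_range_succ,
      Finset.sum_range_succ, IH]
    ring

lemma prod_pair_range (g : ℕ → ℂ) (m : ℕ) :
    ∏ t ∈ range (2*m), g t = ∏ s ∈ range m, (g (2*s) * g (2*s+1)) := by
  induction m with
  | zero => simp
  | succ m IH =>
    rw [show 2*(m+1) = (2*m+1)+1 by ring, Finset.prod_range_succ, Finset.prod_range_succ,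
      Finset.prod_range_succ, IH]
    ring

lemma prod_pair_erase (g : ℕ → ℂ) (m i : ℕ) (hi : i < m) :
    ∏ t ∈ ((range (2*m)).erase (2*i)).erase (2*i+1), g t
      = ∏ s ∈ (range m).erase i, (g (2*s) * g (2*s+1)) := by
  have hset : ((range (2*m)).erase (2*i)).erase (2*i+1)
      = ((range m).erase i).biUnion (fun s => {2*s, 2*s+1}) := by
    ext t
    simp only [Finset.mem_erase, Finset.mem_range, Finset.mem_biUnion, Finset.mem_insert,
      Finset.mem_singleton]
    constructor
    · rintro ⟨h1, h2, h3⟩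
      exact ⟨t/2, by omega, by omega⟩
    · rintro ⟨s, ⟨hs1, hs2⟩, h⟩
      omega
  rw [hset, Finset.prod_biUnion]
  · apply Finset.prod_congr rfl
    intro s _
    rw [Finset.prod_insert (by simp), Finset.prod_singleton]
  · intro a _ b _ hab
    simp only [Finset.disjoint_left, Finset.mem_insert, Finset.mem_singleton]
    intro t ht ht'
    omega

lemma pair_factor (x c : ℂ) (s : ℕ) :
    ((x - e (2*s)) / (c - e (2*s))) * ((x - e (2*s+1)) / (c - e (2*s+1)))
      = (x^2 - e s) / (c^2 - e s) := by
  rw [e_odd s, div_mul_div_comm]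
  congr 1
  · rw [← e_sq s]; ring
  · rw [← e_sq s]; ring

lemma lag_even₀ (m i : ℕ) (hi : i < m) (x : ℂ) :
    lag e (2*i) (2*m) x = (x + e (2*i)) / (2 * e (2*i)) * lag e i m (x^2) := by
  unfold lag
  rw [← Finset.mul_prod_erase _ _ (show 2*i+1 ∈ (range (2*m)).erase (2*i) by
    simp only [Finset.mem_erase, Finset.mem_range]; omega)]
  rw [prod_pair_erase _ m i hi]
  congr 1
  · rw [e_odd i]
    congr 1 <;> ring
  · rw [Finset.prod_congr rfl (fun s _ => pair_factor x (e (2*i)) s)]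
    apply Finset.prod_congr rfl
    intro s _
    rw [e_sq i]

lemma lag_even₁ (m i : ℕ) (hi : i < m) (x : ℂ) :
    lag e (2*i+1) (2*m) x = (x - e (2*i)) / (-(2 * e (2*i))) * lag e i m (x^2) := by
  unfold lag
  rw [← Finset.mul_prod_erase _ _ (show 2*i ∈ (range (2*m)).erase (2*i+1) by
    simp only [Finset.mem_erase, Finset.mem_range]; omega)]
  rw [show ((range (2*m)).erase (2*i+1)).erase (2*i)
        = ((range (2*m)).erase (2*i)).erase (2*i+1) by
      ext t; simp only [Finset.mem_erase, Finset.mem_range]; omega]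
  rw [prod_pair_erase _ m i hi]
  congr 1
  · rw [e_odd i]
    congr 1 <;> ring
  · rw [Finset.prod_congr rfl (fun s _ => pair_factor x (e (2*i+1)) s)]
    apply Finset.prod_congr rfl
    intro s _
    rw [e_odd_sq i]

lemma lag_succ (z : ℕ → ℂ) (j n : ℕ) (hj : j ≠ n) (x : ℂ) :
    lag z j (n+1) x = (x - z n) / (z j - z n) * lag z j n x := by
  unfold lag
  rw [← Finset.mul_prod_erase _ _ (show n ∈ (range (n+1)).erase j by
    simp only [Finset.mem_erase, Finset.mem_range]; omega)]
  congr 1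
  apply Finset.prod_congr
  · ext t
    simp only [Finset.mem_erase, Finset.mem_range]
    omega
  · intros; rfl

lemma lag_self_odd (m : ℕ) : lag e (2*m) (2*m+1) (e (2*m+1)) = 1 := by
  unfold lag
  rw [show (range (2*m+1)).erase (2*m) = range (2*m) by
    rw [Finset.range_add_one, Finset.erase_insert (by simp)]]
  rw [prod_pair_range]
  apply Finset.prod_eq_one
  intro s hs
  rw [pair_factor, e_odd_sq m, e_sq m]
  apply div_self
  rw [sub_ne_zero]
  intro hme
  have := e_inj m s hme
  simp only [Finset.mem_range] at hs
  omega

lemma abs_pair_even (m i : ℕ) (hi : i < m) :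
    ‖lag e (2*i) (2*m) (e (2*m))‖^2 + ‖lag e (2*i+1) (2*m) (e (2*m))‖^2
      = ‖lag e i m (e m)‖^2 := by
  rw [lag_even₀ m i hi, lag_even₁ m i hi, e_sq m]
  rw [norm_mul, norm_mul, mul_pow, mul_pow, ← add_mul]
  have hpar : ‖e (2*m) + e (2*i)‖^2 + ‖e (2*m) - e (2*i)‖^2 = 4 := by
    have h := parallelogram_law_with_norm ℝ (e (2*m)) (e (2*i))
    rw [e_abs, e_abs] at h
    rw [sq, sq]
    linarith
  have h2f : ‖2 * e (2*i)‖ = 2 := by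
    rw [norm_mul, e_abs, Complex.norm_two, mul_one]
  rw [norm_div, norm_div, norm_neg, h2f]
  rw [div_pow, div_pow]
  rw [show ‖e (2*m) + e (2*i)‖^2 / 2^2
        + ‖e (2*m) - e (2*i)‖^2 / 2^2
      = (‖e (2*m) + e (2*i)‖^2 + ‖e (2*m) - e (2*i)‖^2) / 4 by ring]
  rw [hpar]
  norm_num

lemma abs_odd₀ (m i : ℕ) (hi : i < m) :
    ‖lag e (2*i) (2*m+1) (e (2*m+1))‖^2 = ‖lag e i m (e m)‖^2 := by
  have hd : e (2*i) - e (2*m) ≠ 0 :=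
    sub_ne_zero.2 (fun h => by have := e_inj _ _ h; omega)
  have h2 : lag e (2*i) (2*m+1) (e (2*m+1)) = -e (2*m) / e (2*i) * lag e i m (e m) := by
    rw [lag_succ e (2*i) (2*m) (by omega), lag_even₀ m i hi, e_odd_sq m, e_odd m]
    field_simp [hd, e_ne]
    ring
  rw [h2, norm_mul, norm_div, norm_neg, e_abs, e_abs]
  norm_num

lemma abs_odd₁ (m i : ℕ) (hi : i < m) :
    ‖lag e (2*i+1) (2*m+1) (e (2*m+1))‖^2 = ‖lag e i m (e m)‖^2 := by
  have hne : e (2*i+1) ≠ e (2*m) := fun h => by have := e_inj _ _ h; omega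
  have hd2 : -e (2*i) - e (2*m) ≠ 0 := by
    intro h
    apply hne
    rw [e_odd i]
    linear_combination h
  have h2 : lag e (2*i+1) (2*m+1) (e (2*m+1)) = e (2*m) / e (2*i) * lag e i m (e m) := by
    rw [lag_succ e (2*i+1) (2*m) (by omega), lag_even₁ m i hi, e_odd_sq m, e_odd m, e_odd i]
    field_simp [hd2, e_ne]
    ring
  rw [h2, norm_mul, norm_div, e_abs, e_abs]
  norm_num

lemma sigma1_zero : sigma1 0 = 0 := by simp [sigma1]

lemma sigma1_two_mul (m : ℕ) (hm : 1 ≤ m) : sigma1 (2*m) = sigma1 m := by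
  unfold sigma1
  rw [Nat.digits_def' (by norm_num : (1:ℕ) < 2) (by omega)]
  rw [show 2*m % 2 = 0 by omega, show 2*m/2 = m by omega]
  simp [List.count_cons]

lemma sigma1_odd (m : ℕ) : sigma1 (2*m+1) = sigma1 m + 1 := by
  unfold sigma1
  rw [Nat.digits_def' (by norm_num : (1:ℕ) < 2) (by omega)]
  rw [show (2*m+1) % 2 = 1 by omega, show (2*m+1)/2 = m by omega]
  simp [List.count_cons]

lemma sigma1_one : sigma1 1 = 1 := by
  have := sigma1_odd 0
  simpa [sigma1_zero] using this

lemma main_sum : ∀ k, 1 ≤ k →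
    (∑ j ∈ range k, ‖lag e j k (e k)‖^2) = 2^(sigma1 k) - 1 := by
  intro k
  induction k using Nat.strong_induction_on with
  | _ k IH =>
    intro hk
    obtain ⟨m, rfl | rfl⟩ : ∃ m, k = 2*m ∨ k = 2*m+1 := ⟨k/2, by omega⟩
    · have hm : 1 ≤ m := by omega
      rw [_root_.sum_pair, Finset.sum_congr rfl
        (fun i hi => abs_pair_even m i (Finset.mem_range.1 hi)),
        IH m (by omega) hm, sigma1_two_mul m hm]
    · rcases Nat.eq_zero_or_pos m with rfl | hm
      · norm_num [lag, sigma1_one]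
      · rw [Finset.sum_range_succ, lag_self_odd m, _root_.sum_pair]
        rw [Finset.sum_congr rfl (fun i hi => by
          rw [abs_odd₀ m i (Finset.mem_range.1 hi), abs_odd₁ m i (Finset.mem_range.1 hi),
            ← two_mul])]
        rw [← Finset.mul_sum, IH m (by omega) hm, sigma1_odd m, norm_one, one_pow, pow_succ]
        ring

theorem leb2_at_ek (k : ℕ) (hk : 1 ≤ k) :
    leb2 e k (e k) = Real.sqrt (2 ^ sigma1 k - 1) := by
  unfold leb2
  rw [main_sum k hk]
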